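/- Let t, b ≥ 1 be integers and T a finite non-empty subset of ℤ^b. Let S be a set and F a family of at least (t-1)|T|² pairwise disjoint subsets of S. Then there exists X ⊂ ℤ^b × S satisfying: (a) X is a disjoint union of sets of the form (T + x) × A with x ∈ ℤ^b and A ∈ F; (b) for each x ∈ ℤ^b there exists m ≡ 1 (mod t) such that {y ∈ S : (x, y) ∈ X} is a union of exactly m distinct members of F. -/
import Mathlib

open scoped Classical


private noncomputable def gg (t : ℕ) (D : Finset ℤ) : ℤ → ZMod t := fun k =>
  if k < 0 then 0
  else 1 - ∑ Δ ∈ (D.filter fun Δ => 0 < Δ ∧ Δ ≤ k).attach, gg t D (k - Δ.1)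
termination_by k => k.toNat
decreasing_by
  rename_i hk
  have h := (Finset.mem_filter.mp Δ.2).2
  omega

private theorem gg_def (t : ℕ) (D : Finset ℤ) (k : ℤ) :
    gg t D k = if k < 0 then 0
      else 1 - ∑ Δ ∈ (D.filter fun Δ => 0 < Δ ∧ Δ ≤ k), gg t D (k - Δ) := by
  rw [gg]
  congr 1
  rw [← Finset.sum_attach (D.filter fun Δ => 0 < Δ ∧ Δ ≤ k) (fun Δ => gg t D (k - Δ))]

private theorem gg_neg (t : ℕ) (D : Finset ℤ) (k : ℤ) (hk : k < 0) : gg t D k = 0 := by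
  rw [gg_def]; simp [hk]

private theorem gg_sum (t : ℕ) (D : Finset ℤ) (hD : ∀ Δ ∈ D, 0 ≤ Δ) (h0 : (0:ℤ) ∈ D)
    (k : ℤ) (hk : 0 ≤ k) :
    ∑ Δ ∈ D.filter (· ≤ k), gg t D (k - Δ) = 1 := by
  have hsplit : D.filter (· ≤ k) = insert 0 (D.filter fun Δ => 0 < Δ ∧ Δ ≤ k) := by
    ext Δ
    simp only [Finset.mem_filter, Finset.mem_insert]
    constructor
    · rintro ⟨hΔ, hle⟩
      rcases eq_or_lt_of_le (hD Δ hΔ) with h | h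
      · exact Or.inl h.symm
      · exact Or.inr ⟨hΔ, h, hle⟩
    · rintro (rfl | ⟨h1, h2, h3⟩)
      · exact ⟨h0, hk⟩
      · exact ⟨h1, h3⟩
  rw [hsplit, Finset.sum_insert (by simp), sub_zero]
  rw [gg_def t D k, if_neg (by omega)]
  ring

/-- the two-sided solution -/
private noncomputable def mu (t : ℕ) (D : Finset ℤ) (R : ℤ) : ℤ → ZMod t := fun l =>
  if 0 ≤ l then gg t D (l - R) else gg t (D.image (R - ·)) (-1 - l)

private theorem mu_sum (t : ℕ) (D : Finset ℤ) (R : ℤ)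
    (hD : ∀ Δ ∈ D, 0 ≤ Δ ∧ Δ ≤ R) (h0 : (0:ℤ) ∈ D) (hR : R ∈ D) (w : ℤ) :
    ∑ Δ ∈ D, mu t D R (w - Δ) = 1 := by
  have hD0 : ∀ Δ ∈ D, 0 ≤ Δ := fun Δ h => (hD Δ h).1
  rcases le_or_gt R w with hw | hw
  · -- all terms are in the g-region or zero
    have : ∀ Δ ∈ D, mu t D R (w - Δ) = gg t D ((w - R) - Δ) := by
      intro Δ hΔ
      have := hD Δ hΔ
      rw [mu, if_pos (by omega)]
      ring_nf
    rw [Finset.sum_congr rfl this]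
    rw [← Finset.sum_filter_add_sum_filter_not D (· ≤ (w - R))]
    rw [gg_sum t D hD0 h0 (w - R) (by omega)]
    have hz : ∀ Δ ∈ D.filter (fun Δ => ¬ Δ ≤ (w - R)), gg t D ((w-R) - Δ) = 0 := by
      intro Δ hΔ
      have := (Finset.mem_filter.mp hΔ).2
      exact gg_neg t D _ (by omega)
    rw [Finset.sum_eq_zero hz, add_zero]
  · -- negative side
    set D' := D.image (R - ·) with hD'
    have hDim : D'.image (R - ·) = D := by
      rw [hD', Finset.image_image]
      have : ((R - ·) ∘ (R - ·)) = (id : ℤ → ℤ) := by ext x; simp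
      rw [this, Finset.image_id]
    have hinj : Set.InjOn (R - ·) ↑D' := fun a _ b _ h => by dsimp at h; omega
    have hD'0 : ∀ Δ ∈ D', 0 ≤ Δ := by
      intro Δ hΔ
      obtain ⟨u, hu, rfl⟩ := Finset.mem_image.mp hΔ
      have := hD u hu; omega
    have hD'R : ∀ Δ ∈ D', Δ ≤ R := by
      intro Δ hΔ
      obtain ⟨u, hu, rfl⟩ := Finset.mem_image.mp hΔ
      have := hD u hu; omega
    have h0' : (0:ℤ) ∈ D' := by
      rw [hD']; exact Finset.mem_image.mpr ⟨R, hR, by ring⟩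
    set k' := R - 1 - w with hk'
    have hsum : (∑ Δ' ∈ D', mu t D R (w - (R - Δ'))) = ∑ Δ ∈ D, mu t D R (w - Δ) := by
      rw [hD', Finset.sum_image (fun a _ b _ h => by omega)]
      apply Finset.sum_congr rfl
      intro u _
      congr 1
      ring
    rw [← hsum]
    have hterm : ∀ Δ' ∈ D', mu t D R (w - (R - Δ'))
        = if Δ' ≤ k' then gg t D' (k' - Δ') else 0 := by
      intro Δ' hΔ'
      have h1 := hD'0 Δ' hΔ'
      have h2 := hD'R Δ' hΔ'
      rw [mu]
      by_cases hc : 0 ≤ w - (R - Δ')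
      · rw [if_pos hc, if_neg (by omega), gg_neg t D _ (by omega)]
      · rw [if_neg hc, if_pos (by omega)]
        congr 1
        omega
    rw [Finset.sum_congr rfl hterm, ← Finset.sum_filter]
    exact gg_sum t D' hD'0 h0' k' (by omega)

private noncomputable def pick {α : Type*} (pool : Finset (Set α)) (n : ℕ) : Finset (Set α) :=
  if h : n ≤ pool.card then (Finset.exists_subset_card_eq h).choose else ∅

private theorem pick_subset {α : Type*} (pool : Finset (Set α)) (n : ℕ) :
    pick pool n ⊆ pool := by
  rw [pick]
  split
  · exact (Finset.exists_subset_card_eq ‹_›).choose_spec.1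
  · exact Finset.empty_subset _

private theorem pick_card {α : Type*} (pool : Finset (Set α)) (n : ℕ) (h : n ≤ pool.card) :
    (pick pool n).card = n := by
  rw [pick, dif_pos h]
  exact (Finset.exists_subset_card_eq h).choose_spec.2

private noncomputable def posS (t : ℕ) {α : Type*} (F : Finset (Set α)) (ν : ℤ → ℕ)
    (E : Finset ℤ) : ℕ → Finset (Set α) := fun k =>
  pick (F \ (E.filter fun δ => 0 < δ ∧ δ ≤ (k:ℤ)).attach.biUnion
      (fun δ => posS t F ν E ((k:ℤ) - δ.1).toNat)) (ν k)
termination_by k => k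
decreasing_by
  have h := (Finset.mem_filter.mp δ.2).2
  omega

private noncomputable def negS (t : ℕ) {α : Type*} (F : Finset (Set α)) (ν : ℤ → ℕ)
    (E : Finset ℤ) : ℕ → Finset (Set α) := fun j =>
  pick (F \ (E.filter fun δ => 0 < δ).attach.biUnion
      (fun δ => if h : δ.1 ≤ (j:ℤ) then negS t F ν E ((j:ℤ) - δ.1).toNat
                else posS t F ν E (δ.1 - (j:ℤ) - 1).toNat)) (ν (-(j:ℤ)-1))
termination_by j => j
decreasing_by
  have h2 := (Finset.mem_filter.mp δ.2).2
  omega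

private noncomputable def SS (t : ℕ) {α : Type*} (F : Finset (Set α)) (ν : ℤ → ℕ)
    (E : Finset ℤ) : ℤ → Finset (Set α) := fun l =>
  if 0 ≤ l then posS t F ν E l.toNat else negS t F ν E (-l-1).toNat

private theorem SS_disjoint {α : Type*} (t : ℕ) (F : Finset (Set α)) (ν : ℤ → ℕ)
    (E : Finset ℤ) (hE : ∀ δ ∈ E, 0 < δ) (l l' : ℤ) (hδ : l - l' ∈ E) :
    Disjoint (SS t F ν E l) (SS t F ν E l') := by
  have hpos : 0 < l - l' := hE _ hδ
  rcases le_or_gt 0 l' with hl' | hl'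
  · -- both nonnegative
    have hl : 0 ≤ l := by omega
    have hmem : (l - l') ∈ E.filter fun δ => 0 < δ ∧ δ ≤ ((l.toNat : ℤ)) := by
      rw [Finset.mem_filter]
      exact ⟨hδ, hpos, by omega⟩
    have h2 : SS t F ν E l' ⊆ (E.filter fun δ => 0 < δ ∧ δ ≤ ((l.toNat:ℤ))).attach.biUnion
        (fun δ => posS t F ν E ((l.toNat:ℤ) - δ.1).toNat) := by
      intro A hA
      rw [Finset.mem_biUnion]
      refine ⟨⟨l - l', hmem⟩, Finset.mem_attach _ _, ?_⟩
      show A ∈ posS t F ν E (((l.toNat:ℤ)) - (l - l')).toNat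
      have harg : (((l.toNat:ℤ)) - (l - l')).toNat = l'.toNat := by omega
      rw [harg]
      rw [SS, if_pos hl'] at hA
      exact hA
    have h1 : SS t F ν E l ⊆ F \ ((E.filter fun δ => 0 < δ ∧ δ ≤ ((l.toNat:ℤ))).attach.biUnion
        (fun δ => posS t F ν E ((l.toNat:ℤ) - δ.1).toNat)) := by
      rw [SS, if_pos hl, posS]
      exact pick_subset _ _
    exact Finset.sdiff_disjoint.mono h1 h2
  · rcases le_or_gt 0 l with hl | hl
    · -- l ≥ 0 > l' : negative side avoids positive side
      have hmem : (l - l') ∈ E.filter fun δ => 0 < δ := by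
        rw [Finset.mem_filter]; exact ⟨hδ, hpos⟩
      set j' := (-l'-1).toNat with hj'
      have h2 : SS t F ν E l ⊆ (E.filter fun δ => 0 < δ).attach.biUnion
          (fun δ => if h : δ.1 ≤ ((j':ℕ):ℤ) then negS t F ν E (((j':ℕ):ℤ) - δ.1).toNat
                else posS t F ν E (δ.1 - ((j':ℕ):ℤ) - 1).toNat) := by
        intro A hA
        rw [Finset.mem_biUnion]
        refine ⟨⟨l - l', hmem⟩, Finset.mem_attach _ _, ?_⟩
        show A ∈ if h : (l - l') ≤ ((j':ℕ):ℤ) then negS t F ν E (((j':ℕ):ℤ) - (l - l')).toNat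
                else posS t F ν E ((l - l') - ((j':ℕ):ℤ) - 1).toNat
        rw [dif_neg (by omega)]
        have harg : ((l - l') - ((j':ℕ):ℤ) - 1).toNat = l.toNat := by omega
        rw [harg]
        rw [SS, if_pos hl] at hA
        exact hA
      have h1 : SS t F ν E l' ⊆ F \ ((E.filter fun δ => 0 < δ).attach.biUnion
          (fun δ => if h : δ.1 ≤ ((j':ℕ):ℤ) then negS t F ν E (((j':ℕ):ℤ) - δ.1).toNat
                else posS t F ν E (δ.1 - ((j':ℕ):ℤ) - 1).toNat)) := by
        rw [SS, if_neg (by omega), negS]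
        exact pick_subset _ _
      exact (Finset.sdiff_disjoint.mono h1 h2).symm
    · -- both negative
      have hmem : (l - l') ∈ E.filter fun δ => 0 < δ := by
        rw [Finset.mem_filter]; exact ⟨hδ, hpos⟩
      set j' := (-l'-1).toNat with hj'
      have h2 : SS t F ν E l ⊆ (E.filter fun δ => 0 < δ).attach.biUnion
          (fun δ => if h : δ.1 ≤ ((j':ℕ):ℤ) then negS t F ν E (((j':ℕ):ℤ) - δ.1).toNat
                else posS t F ν E (δ.1 - ((j':ℕ):ℤ) - 1).toNat) := by
        intro A hA
        rw [Finset.mem_biUnion]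
        refine ⟨⟨l - l', hmem⟩, Finset.mem_attach _ _, ?_⟩
        show A ∈ if h : (l - l') ≤ ((j':ℕ):ℤ) then negS t F ν E (((j':ℕ):ℤ) - (l - l')).toNat
                else posS t F ν E ((l - l') - ((j':ℕ):ℤ) - 1).toNat
        rw [dif_pos (by omega)]
        have harg : (((j':ℕ):ℤ) - (l - l')).toNat = (-l-1).toNat := by omega
        rw [harg]
        rw [SS, if_neg (by omega)] at hA
        exact hA
      have h1 : SS t F ν E l' ⊆ F \ ((E.filter fun δ => 0 < δ).attach.biUnion
          (fun δ => if h : δ.1 ≤ ((j':ℕ):ℤ) then negS t F ν E (((j':ℕ):ℤ) - δ.1).toNat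
                else posS t F ν E (δ.1 - ((j':ℕ):ℤ) - 1).toNat)) := by
        rw [SS, if_neg (by omega), negS]
        exact pick_subset _ _
      exact (Finset.sdiff_disjoint.mono h1 h2).symm

private theorem SS_subset {α : Type*} (t : ℕ) (F : Finset (Set α)) (ν : ℤ → ℕ)
    (E : Finset ℤ) (l : ℤ) : SS t F ν E l ⊆ F := by
  rw [SS]
  split
  · rw [posS]
    exact (pick_subset _ _).trans (Finset.sdiff_subset)
  · rw [negS]
    exact (pick_subset _ _).trans (Finset.sdiff_subset)

section cards

variable {α : Type*} (t : ℕ) (F : Finset (Set α)) (ν : ℤ → ℕ) (E : Finset ℤ)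
  (hν : ∀ l, ν l ≤ t - 1) (hF : (t - 1) * (E.card + 1) ≤ F.card)

include hν hF

private theorem posS_card : ∀ k : ℕ, (posS t F ν E k).card = ν k := by
  intro k
  induction k using Nat.strong_induction_on with
  | _ k ih =>
    rw [posS]
    apply pick_card
    set B := (E.filter fun δ => 0 < δ ∧ δ ≤ (k:ℤ)).attach.biUnion
      (fun δ => posS t F ν E ((k:ℤ) - δ.1).toNat) with hB
    have hBcard : B.card ≤ E.card * (t - 1) := by
      calc B.card ≤ ∑ δ ∈ (E.filter fun δ => 0 < δ ∧ δ ≤ (k:ℤ)).attach,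
          (posS t F ν E ((k:ℤ) - δ.1).toNat).card := Finset.card_biUnion_le
        _ ≤ ∑ _δ ∈ (E.filter fun δ => 0 < δ ∧ δ ≤ (k:ℤ)).attach, (t-1) := by
            apply Finset.sum_le_sum
            intro δ hδ
            have h := (Finset.mem_filter.mp δ.2).2
            rw [ih (((k:ℤ) - δ.1).toNat) (by omega)]
            exact hν _
        _ ≤ E.card * (t-1) := by
            rw [Finset.sum_const, smul_eq_mul, Finset.card_attach]
            exact Nat.mul_le_mul_right _ (Finset.card_filter_le _ _)
    have hpool : (t - 1) ≤ (F \ B).card := by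
      have := Finset.le_card_sdiff B F
      have : F.card - B.card ≤ (F \ B).card := Finset.le_card_sdiff B F
      have hBF : B.card + (t-1) ≤ F.card := by
        calc B.card + (t-1) ≤ E.card * (t-1) + (t-1) := by omega
          _ = (t-1) * (E.card + 1) := by ring
          _ ≤ F.card := hF
      omega
    exact le_trans (hν _) hpool
  
private theorem negS_card : ∀ j : ℕ, (negS t F ν E j).card = ν (-(j:ℤ)-1) := by
  intro j
  induction j using Nat.strong_induction_on with
  | _ j ih =>
    rw [negS]
    apply pick_card
    set B := (E.filter fun δ => 0 < δ).attach.biUnion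
      (fun δ => if h : δ.1 ≤ (j:ℤ) then negS t F ν E ((j:ℤ) - δ.1).toNat
                else posS t F ν E (δ.1 - (j:ℤ) - 1).toNat) with hB
    have hBcard : B.card ≤ E.card * (t - 1) := by
      calc B.card ≤ ∑ δ ∈ (E.filter fun δ => 0 < δ).attach,
          (if h : δ.1 ≤ (j:ℤ) then negS t F ν E ((j:ℤ) - δ.1).toNat
                else posS t F ν E (δ.1 - (j:ℤ) - 1).toNat).card := Finset.card_biUnion_le
        _ ≤ ∑ _δ ∈ (E.filter fun δ => 0 < δ).attach, (t-1) := by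
            apply Finset.sum_le_sum
            intro δ hδ
            have h := (Finset.mem_filter.mp δ.2).2
            split
            · rw [ih (((j:ℤ) - δ.1).toNat) (by omega)]
              exact hν _
            · rw [posS_card t F ν E hν hF]
              exact hν _
        _ ≤ E.card * (t-1) := by
            rw [Finset.sum_const, smul_eq_mul, Finset.card_attach]
            exact Nat.mul_le_mul_right _ (Finset.card_filter_le _ _)
    have hpool : (t - 1) ≤ (F \ B).card := by
      have : F.card - B.card ≤ (F \ B).card := Finset.le_card_sdiff B F
      have hBF : B.card + (t-1) ≤ F.card := by
        calc B.card + (t-1) ≤ E.card * (t-1) + (t-1) := by omega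
          _ = (t-1) * (E.card + 1) := by ring
          _ ≤ F.card := hF
      omega
    exact le_trans (hν _) hpool

private theorem SS_card (l : ℤ) : (SS t F ν E l).card = ν l := by
  rw [SS]
  split
  · rw [posS_card t F ν E hν hF]
    congr 1
    omega
  · rw [negS_card t F ν E hν hF]
    congr 1
    omega

end cards

private theorem digits_zero (C : ℕ) : ∀ (b : ℕ) (d : Fin b → ℤ),
    (∀ i, (d i).natAbs ≤ 2*C) →
    (∑ i, d i * (2*(C:ℤ)+1)^(i:ℕ)) = 0 → ∀ i, d i = 0 := by
  intro b
  induction b with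
  | zero => intro d _ _ i; exact absurd i.2 (by omega)
  | succ b ih =>
    intro d hbound hsum i
    set K : ℤ := 2*(C:ℤ)+1 with hK
    have hsplit : (∑ i : Fin (b+1), d i * K^(i:ℕ))
        = d 0 + (∑ i : Fin b, d i.succ * K^(i:ℕ)) * K := by
      rw [Fin.sum_univ_succ]
      simp only [pow_zero, mul_one, Fin.val_succ, Fin.val_zero]
      congr 1
      rw [Finset.sum_mul]
      apply Finset.sum_congr rfl
      intro j _
      rw [pow_succ]
      ring
    rw [hsplit] at hsum
    set S : ℤ := ∑ i : Fin b, d i.succ * K^(i:ℕ) with hS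
    have hd0 : d 0 = -S * K := by linarith
    have habs : (d 0).natAbs ≤ 2*C := hbound 0
    have hSabs : S.natAbs * (2*C+1) ≤ 2*C := by
      have : (d 0).natAbs = S.natAbs * (2*C+1) := by
        rw [hd0]
        rw [Int.natAbs_mul, Int.natAbs_neg]
        have hKabs : K.natAbs = 2*C+1 := by rw [hK]; omega
        rw [hKabs]
      omega
    have hS0 : S = 0 := by
      rcases Nat.eq_zero_or_pos S.natAbs with h | h
      · exact Int.natAbs_eq_zero.mp h
      · exfalso
        have := Nat.mul_le_mul h (le_refl (2*C+1))
        omega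
    have hd00 : d 0 = 0 := by rw [hd0, hS0]; ring
    have htail := ih (fun i => d i.succ) (fun i => hbound i.succ) (by rw [← hS, hS0])
    refine Fin.cases hd00 (fun j => htail j) i

/-- given a family `F` of at least `(t-1)|T|²` pairwise disjoint
subsets of `S`, there is `X ⊆ ℤ^b × S` that is a disjoint union of sets
`(T + x) × A` (`A ∈ F`) whose slice over each `x ∈ ℤ^b` is a union of exactly
`m ≡ 1 (mod t)` distinct members of `F`. -/
theorem coverHoles (t b : ℕ) (ht : 1 ≤ t) (hb : 1 ≤ b)
    (T : Finset (Fin b → ℤ)) (hT : T.Nonempty)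
    {α : Type*} (F : Finset (Set α))
    (hFdisj : (F : Set (Set α)).PairwiseDisjoint id)
    (hFcard : (t - 1) * T.card ^ 2 ≤ F.card) :
    ∃ X : Set ((Fin b → ℤ) × α),
      (∃ P : Set (Set ((Fin b → ℤ) × α)),
        (∀ Q ∈ P, ∃ (x : Fin b → ℤ), ∃ A ∈ F,
          Q = {p : (Fin b → ℤ) × α | p.1 - x ∈ T ∧ p.2 ∈ A}) ∧
        P.PairwiseDisjoint id ∧ ⋃₀ P = X) ∧
      (∀ x : Fin b → ℤ, ∃ m : ℕ, m % t = 1 % t ∧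
        ∃ 𝒮 : Finset (Set α), 𝒮 ⊆ F ∧ 𝒮.card = m ∧
          {y : α | (x, y) ∈ X} = ⋃ A ∈ 𝒮, A) := by
  classical
  haveI : NeZero t := ⟨by omega⟩
  obtain ⟨φ, hφsub, hkey⟩ : ∃ φ : (Fin b → ℤ) → ℤ,
      (∀ x y : Fin b → ℤ, φ x - φ y = φ (x - y)) ∧
      (∀ x x' : Fin b → ℤ, ∀ τ ∈ T, ∀ τ' ∈ T,
        x - x' = τ - τ' → φ x = φ x' → x = x') := by
    obtain ⟨C, hCb⟩ : ∃ C : ℕ, ∀ τ ∈ T, ∀ i, (τ i).natAbs ≤ C := by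
      refine ⟨T.sup (fun τ => Finset.univ.sup fun i => (τ i).natAbs), fun τ hτ i => ?_⟩
      have h1 : (τ i).natAbs ≤ Finset.univ.sup (fun i => (τ i).natAbs) :=
        Finset.le_sup (f := fun i => (τ i).natAbs) (Finset.mem_univ i)
      have h2 : Finset.univ.sup (fun i => (τ i).natAbs)
          ≤ T.sup (fun τ => Finset.univ.sup fun i => (τ i).natAbs) :=
        Finset.le_sup (f := fun τ => Finset.univ.sup fun i => (τ i).natAbs) hτ
      exact le_trans h1 h2
    have hlin : ∀ x y : Fin b → ℤ,
        (∑ i, x i * (2*(C:ℤ)+1)^(i:ℕ)) - (∑ i, y i * (2*(C:ℤ)+1)^(i:ℕ))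
        = ∑ i, (x - y) i * (2*(C:ℤ)+1)^(i:ℕ) := by
      intro x y
      rw [← Finset.sum_sub_distrib]
      apply Finset.sum_congr rfl
      intro i _
      rw [Pi.sub_apply]
      ring
    refine ⟨fun x => ∑ i, x i * (2*(C:ℤ)+1)^(i:ℕ), hlin, ?_⟩
    intro x x' τ hτ τ' hτ' hd hφeq
    have hφeq' : (∑ i, x i * (2*(C:ℤ)+1)^(i:ℕ)) = ∑ i, x' i * (2*(C:ℤ)+1)^(i:ℕ) := hφeq
    clear hφeq
    have h0 : (∑ i, (x - x') i * (2*(C:ℤ)+1)^(i:ℕ)) = 0 := by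
      rw [← hlin, hφeq', sub_self]
    have hb2 : ∀ i, ((x - x') i).natAbs ≤ 2*C := by
      intro i
      have h1 := hCb τ hτ i
      have h2 := hCb τ' hτ' i
      have h3 : (x - x') i = τ i - τ' i := by rw [hd]; rfl
      rw [h3]
      omega
    have hall := digits_zero C b (x - x') hb2 h0
    funext i
    have h := hall i
    rw [Pi.sub_apply] at h
    omega
  have hφinjT : Set.InjOn φ T := by
    intro τ hτ τ' hτ' h
    exact hkey τ τ' τ hτ τ' hτ' rfl h
  set T₁ : Finset ℤ := T.image φ with hT₁
  have hT₁ne : T₁.Nonempty := hT.image φ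
  set a : ℤ := T₁.min' hT₁ne with ha
  set R : ℤ := T₁.max' hT₁ne - a with hR
  set D : Finset ℤ := T.image (fun τ => φ τ - a) with hD
  have hDeq : D = T₁.image (fun u => u - a) := by
    rw [hD, hT₁, Finset.image_image]; rfl
  have hDmem : ∀ Δ ∈ D, 0 ≤ Δ ∧ Δ ≤ R := by
    intro Δ hΔ
    rw [hDeq] at hΔ
    obtain ⟨u, hu, rfl⟩ := Finset.mem_image.mp hΔ
    have h1 := T₁.min'_le u hu
    have h2 := T₁.le_max' u hu
    omega
  have h0D : (0:ℤ) ∈ D := by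
    rw [hDeq]
    exact Finset.mem_image.mpr ⟨a, T₁.min'_mem hT₁ne, by ring⟩
  have hRD : R ∈ D := by
    rw [hDeq]
    exact Finset.mem_image.mpr ⟨T₁.max' hT₁ne, T₁.max'_mem hT₁ne, by rw [hR]⟩
  obtain ⟨ν, hνlt, hνcast⟩ : ∃ ν : ℤ → ℕ, (∀ l, ν l ≤ t - 1) ∧
      (∀ l, ((ν l : ℕ) : ZMod t) = mu t D R l) :=
    ⟨fun l => (mu t D R l).val,
     fun l => by
       show (mu t D R l).val ≤ t - 1
       have := ZMod.val_lt (mu t D R l); omega,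
     fun l => by
       show (((mu t D R l).val : ℕ) : ZMod t) = mu t D R l
       rw [ZMod.natCast_val, ZMod.cast_id]⟩
  set E : Finset ℤ := ((D ×ˢ D).image fun p => p.1 - p.2).filter (fun δ => 0 < δ) with hE
  have hEpos : ∀ δ ∈ E, 0 < δ := fun δ h => (Finset.mem_filter.mp h).2
  have hDcard : D.card = T.card := by
    rw [hD]
    rw [Finset.card_image_of_injOn]
    intro τ hτ τ' hτ' h
    apply hφinjT hτ hτ'
    dsimp at h
    omega
  have hEcard : E.card + 1 ≤ T.card * T.card := by
    have h0E : (0:ℤ) ∉ E := fun h => by have := hEpos 0 h; omega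
    have hsub : insert (0:ℤ) E ⊆ (D ×ˢ D).image fun p => p.1 - p.2 := by
      intro δ hδ
      rcases Finset.mem_insert.mp hδ with rfl | h
      · exact Finset.mem_image.mpr ⟨(0,0), Finset.mem_product.mpr ⟨h0D, h0D⟩, by ring⟩
      · exact Finset.filter_subset _ _ h
    calc E.card + 1 = (insert (0:ℤ) E).card := (Finset.card_insert_of_notMem h0E).symm
      _ ≤ ((D ×ˢ D).image fun p => p.1 - p.2).card := Finset.card_le_card hsub
      _ ≤ (D ×ˢ D).card := Finset.card_image_le
      _ = T.card * T.card := by rw [Finset.card_product, hDcard]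
  have hFbig : (t-1) * (E.card + 1) ≤ F.card := by
    calc (t-1) * (E.card + 1) ≤ (t-1) * (T.card * T.card) := Nat.mul_le_mul_left _ hEcard
      _ = (t-1) * T.card^2 := by ring
      _ ≤ F.card := hFcard
  obtain ⟨Sf, hSsub, hScard, hSdisj⟩ : ∃ Sf : ℤ → Finset (Set α),
      (∀ l, Sf l ⊆ F) ∧ (∀ l, (Sf l).card = ν l) ∧
      (∀ l l', l - l' ∈ E → Disjoint (Sf l) (Sf l')) :=
    ⟨SS t F ν E, fun l => SS_subset t F ν E l,
     fun l => SS_card t F ν E hνlt hFbig l,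
     fun l l' h => SS_disjoint t F ν E hEpos l l' h⟩
  have hmusum : ∀ w, ∑ Δ ∈ D, mu t D R (w - Δ) = 1 := mu_sum t D R hDmem h0D hRD
  have hconf : ∀ (τ τ' : Fin b → ℤ), τ ∈ T → τ' ∈ T → ∀ l l' : ℤ,
      l - l' = φ τ - φ τ' → φ τ ≠ φ τ' → Disjoint (Sf l) (Sf l') := by
    intro τ τ' hτ hτ' l l' hll hne
    have hmem1 : φ τ - a ∈ D := by rw [hD]; exact Finset.mem_image.mpr ⟨τ, hτ, rfl⟩
    have hmem2 : φ τ' - a ∈ D := by rw [hD]; exact Finset.mem_image.mpr ⟨τ', hτ', rfl⟩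
    rcases lt_or_gt_of_ne hne with h | h
    · have hm : l' - l ∈ E := by
        rw [hE]
        refine Finset.mem_filter.mpr ⟨Finset.mem_image.mpr
          ⟨(φ τ' - a, φ τ - a), Finset.mem_product.mpr ⟨hmem2, hmem1⟩, by dsimp; omega⟩,
          by omega⟩
      exact (hSdisj l' l hm).symm
    · have hm : l - l' ∈ E := by
        rw [hE]
        refine Finset.mem_filter.mpr ⟨Finset.mem_image.mpr
          ⟨(φ τ - a, φ τ' - a), Finset.mem_product.mpr ⟨hmem1, hmem2⟩, by dsimp; omega⟩,
          by omega⟩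
      exact hSdisj l l' hm
  refine ⟨⋃₀ {Q | ∃ x : Fin b → ℤ, ∃ A ∈ Sf (φ x),
      Q = {p : (Fin b → ℤ) × α | p.1 - x ∈ T ∧ p.2 ∈ A}},
    ⟨{Q | ∃ x : Fin b → ℤ, ∃ A ∈ Sf (φ x),
      Q = {p : (Fin b → ℤ) × α | p.1 - x ∈ T ∧ p.2 ∈ A}}, ?_, ?_, rfl⟩, ?_⟩
  · -- members have the right form
    rintro Q hQ
    obtain ⟨x, A, hA, rfl⟩ := hQ
    exact ⟨x, A, hSsub _ hA, rfl⟩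
  · -- pairwise disjoint
    intro Q hQ Q' hQ' hne
    obtain ⟨x, A, hA, rfl⟩ := hQ
    obtain ⟨x', A', hA', rfl⟩ := hQ'
    simp only [Function.onFun, id_eq]
    rw [Set.disjoint_left]
    rintro p ⟨hp1, hp2⟩ ⟨hp1', hp2'⟩
    by_cases hAA : A = A'
    · subst hAA
      have hdiff : x - x' = (p.1 - x') - (p.1 - x) := by abel
      by_cases hφx : φ x = φ x'
      · have : x = x' := hkey x x' (p.1 - x') hp1' (p.1 - x) hp1 hdiff hφx
        exact hne (by rw [this])
      · have hφd : φ x - φ x' = φ (p.1 - x') - φ (p.1 - x) := by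
          rw [hφsub x x', hφsub (p.1 - x') (p.1 - x), hdiff]
        have hφne : φ (p.1 - x') ≠ φ (p.1 - x) := by
          intro h; apply hφx; rw [h] at hφd; omega
        have hdisj := hconf (p.1 - x') (p.1 - x) hp1' hp1 (φ x) (φ x') hφd hφne
        exact Finset.disjoint_left.mp hdisj hA hA'
    · have hd := hFdisj (Finset.mem_coe.mpr (hSsub _ hA)) (Finset.mem_coe.mpr (hSsub _ hA')) hAA
      exact Set.disjoint_left.mp hd hp2 hp2'
  · -- slices
    intro z
    have hd𝒮 : ∀ τ ∈ T, ∀ τ' ∈ T, τ ≠ τ' →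
        Disjoint (Sf (φ z - φ τ)) (Sf (φ z - φ τ')) := by
      intro τ hτ τ' hτ' hne
      have hφne : φ τ' ≠ φ τ := fun h => hne (hφinjT hτ hτ' h.symm)
      exact hconf τ' τ hτ' hτ _ _ (by ring) hφne
    have hreidx : ∀ f : ℤ → ZMod t, ∑ Δ ∈ D, f Δ = ∑ τ ∈ T, f (φ τ - a) := by
      intro f
      rw [hD]
      exact Finset.sum_image (fun x hx y hy h => hφinjT hx hy (by omega))
    refine ⟨(T.biUnion (fun τ => Sf (φ z - φ τ))).card, ?_,
      T.biUnion (fun τ => Sf (φ z - φ τ)), ?_, rfl, ?_⟩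
    · -- cardinality mod t
      have hcard : (T.biUnion (fun τ => Sf (φ z - φ τ))).card
          = ∑ τ ∈ T, (Sf (φ z - φ τ)).card := Finset.card_biUnion hd𝒮
      have hcast : (((T.biUnion (fun τ => Sf (φ z - φ τ))).card : ℕ) : ZMod t)
          = ((1:ℕ) : ZMod t) := by
        rw [hcard]
        push_cast
        have hterm : ∀ τ ∈ T, (((Sf (φ z - φ τ)).card : ℕ) : ZMod t)
            = mu t D R (φ z - φ τ) := by
          intro τ hτ
          rw [hScard, hνcast]
        rw [Finset.sum_congr rfl hterm]
        have h2 : ∑ τ ∈ T, mu t D R (φ z - φ τ)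
            = ∑ Δ ∈ D, mu t D R ((φ z - a) - Δ) := by
          rw [hreidx (fun Δ => mu t D R ((φ z - a) - Δ))]
          apply Finset.sum_congr rfl
          intro τ _
          congr 1
          ring
        rw [h2, hmusum (φ z - a)]
        try norm_num
      exact (ZMod.natCast_eq_natCast_iff _ _ _).mp hcast
    · exact Finset.biUnion_subset.mpr (fun τ _ => hSsub _)
    · -- slice equality
      ext y
      simp only [Set.mem_setOf_eq, Set.mem_sUnion, Set.mem_iUnion, exists_prop]
      constructor
      · rintro ⟨Q, hQ, hzy⟩
        obtain ⟨x, A, hA, rfl⟩ := hQ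
        obtain ⟨hzx, hyA⟩ := hzy
        refine ⟨A, ?_, hyA⟩
        apply Finset.mem_biUnion.mpr ⟨z - x, hzx, ?_⟩
        have hx : φ z - φ (z - x) = φ x := by
          rw [hφsub z (z - x)]
          have : z - (z - x) = x := by abel
          rw [this]
        rw [hx]
        exact hA
      · rintro ⟨A, hA𝒮, hyA⟩
        obtain ⟨τ, hτ, hA⟩ := Finset.mem_biUnion.mp hA𝒮
        refine ⟨{p : (Fin b → ℤ) × α | p.1 - (z - τ) ∈ T ∧ p.2 ∈ A}, ?_, ?_, hyA⟩
        · refine ⟨z - τ, A, ?_, rfl⟩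
          rw [← hφsub z τ]
          exact hA
        · show z - (z - τ) ∈ T
          rw [sub_sub_cancel]
          exact hτ
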